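/- Fix T > 0 and a real number k. For a < −|k| define f_a(k) = (−k·sinh(ℓT) − ℓ) / (2ℓ·(a − k·cosh(ℓT))), where ℓ = √(a² − k²). Then lim_{a→−∞} 2|a|·f_a(k) = 1. -/

import Mathlib

open Real Filter

lemma exp_half_le_cosh (x : ℝ) : Real.exp x / 2 ≤ Real.cosh x := by
  rw [Real.cosh_eq]; have := Real.exp_pos (-x); linarith

lemma cosh_tendsto : Tendsto Real.cosh atTop atTop :=
  tendsto_atTop_mono exp_half_le_cosh (Real.tendsto_exp_atTop.atTop_div_const two_pos)

lemma my_sqrt_tendsto : Tendsto Real.sqrt atTop atTop := by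
  apply tendsto_atTop_atTop.mpr
  intro b
  refine ⟨max (b ^ 2) 0, fun a ha => ?_⟩
  have h1 : Real.sqrt (b ^ 2) ≤ Real.sqrt a :=
    Real.sqrt_le_sqrt (le_trans (le_max_left _ _) ha)
  calc b ≤ |b| := le_abs_self b
    _ = Real.sqrt (b ^ 2) := (Real.sqrt_sq_eq_abs b).symm
    _ ≤ Real.sqrt a := h1

lemma id_div_cosh : Tendsto (fun x => x / Real.cosh x) atTop (nhds 0) := by
  have hg : Tendsto (fun x : ℝ => 2 * (x ^ 1 * Real.exp (-x))) atTop (nhds 0) := by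
    simpa using (tendsto_pow_mul_exp_neg_atTop_nhds_zero 1).const_mul 2
  apply squeeze_zero_norm' _ hg
  filter_upwards [eventually_ge_atTop (0:ℝ)] with x hx
  have h1 : Real.exp x / 2 ≤ Real.cosh x := exp_half_le_cosh x
  have h2 : (0:ℝ) < Real.exp x / 2 := by positivity
  have hc : (0:ℝ) < Real.cosh x := Real.cosh_pos x
  rw [Real.norm_eq_abs, abs_div, abs_of_nonneg hx, abs_of_pos hc]
  calc x / Real.cosh x ≤ x / (Real.exp x / 2) := by
        exact div_le_div_of_nonneg_left hx h2 h1
    _ = 2 * (x ^ 1 * Real.exp (-x)) := by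
        rw [Real.exp_neg]; field_simp

lemma exp_neg_div_cosh : Tendsto (fun x => Real.exp (-x) / Real.cosh x) atTop (nhds 0) := by
  apply squeeze_zero_norm _ (Real.tendsto_exp_neg_atTop_nhds_zero)
  intro x
  have hc : (0:ℝ) < Real.cosh x := Real.cosh_pos x
  rw [Real.norm_eq_abs, abs_div, abs_of_pos (Real.exp_pos _), abs_of_pos hc]
  exact div_le_self (Real.exp_pos _).le (Real.one_le_cosh x)

lemma tanh_tendsto : Tendsto (fun x => Real.sinh x / Real.cosh x) atTop (nhds 1) := by
  have h : ∀ x : ℝ, Real.sinh x / Real.cosh x = 1 - Real.exp (-x) / Real.cosh x := by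
    intro x
    have hc : Real.cosh x ≠ 0 := (Real.cosh_pos x).ne'
    have hs : Real.sinh x = Real.cosh x - Real.exp (-x) := by
      have := Real.cosh_sub_sinh x; linarith
    rw [hs]; field_simp
  simp only [h]
  simpa using (tendsto_const_nhds (x := (1:ℝ))).sub exp_neg_div_cosh

theorem stmt7 (T k : ℝ) (hT : 0 < T) :
    Filter.Tendsto (fun a : ℝ =>
      2 * |a| *
        ((-k * Real.sinh (Real.sqrt (a ^ 2 - k ^ 2) * T) - Real.sqrt (a ^ 2 - k ^ 2)) /
          (2 * Real.sqrt (a ^ 2 - k ^ 2) *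
            (a - k * Real.cosh (Real.sqrt (a ^ 2 - k ^ 2) * T)))))
      Filter.atBot (nhds 1) := by
  have hev : ∀ᶠ a : ℝ in atBot, a < -(|k| + 1) := eventually_lt_atBot _
  have key : ∀ a : ℝ, a < -(|k| + 1) →
      k ^ 2 < a ^ 2 ∧ a < 0 ∧ 0 < Real.sqrt (a ^ 2 - k ^ 2) := by
    intro a ha
    have hk0 : (0:ℝ) ≤ |k| := abs_nonneg k
    have ha0 : a < 0 := by linarith
    have h2 : |k| < |a| := by rw [abs_of_neg ha0]; linarith
    have h3 : k ^ 2 < a ^ 2 := by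
      have := pow_lt_pow_left₀ h2 (abs_nonneg k) (two_ne_zero)
      simpa [sq_abs] using this
    exact ⟨h3, ha0, Real.sqrt_pos.mpr (by linarith)⟩
  have hsq : Tendsto (fun a : ℝ => a ^ 2 - k ^ 2) atBot atTop := by
    apply tendsto_atTop_add_const_right
    have : Tendsto (fun a : ℝ => (-a) ^ 2) atBot atTop :=
      (tendsto_pow_atTop (two_ne_zero)).comp tendsto_neg_atBot_atTop
    simpa using this
  have hell : Tendsto (fun a : ℝ => Real.sqrt (a ^ 2 - k ^ 2)) atBot atTop :=
    my_sqrt_tendsto.comp hsq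
  have hellT : Tendsto (fun a : ℝ => Real.sqrt (a ^ 2 - k ^ 2) * T) atBot atTop :=
    hell.atTop_mul_const hT
  set L : ℝ → ℝ := fun a => Real.sqrt (a ^ 2 - k ^ 2) with hL
  -- |a| / L a → 1
  have hA : Tendsto (fun a : ℝ => |a| / L a) atBot (nhds 1) := by
    have h1 : Tendsto (fun a : ℝ => 1 + k ^ 2 * (a ^ 2 - k ^ 2)⁻¹) atBot (nhds 1) := by
      have := (hsq.inv_tendsto_atTop).const_mul (k ^ 2)
      simpa using (tendsto_const_nhds (x := (1:ℝ))).add this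
    have h2 : Tendsto (fun a : ℝ => Real.sqrt (1 + k ^ 2 * (a ^ 2 - k ^ 2)⁻¹)) atBot
        (nhds 1) := by
      have := (Real.continuous_sqrt.tendsto 1).comp h1
      simpa [Function.comp_def] using this
    apply h2.congr'
    filter_upwards [hev] with a ha
    obtain ⟨hk2, ha0, hLpos⟩ := key a ha
    have hd : (0:ℝ) < a ^ 2 - k ^ 2 := by linarith
    have : 1 + k ^ 2 * (a ^ 2 - k ^ 2)⁻¹ = a ^ 2 / (a ^ 2 - k ^ 2) := by
      field_simp
      ring
    rw [this, Real.sqrt_div (sq_nonneg a), Real.sqrt_sq_eq_abs]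
  rcases eq_or_ne k 0 with hk | hk
  · -- k = 0 case
    apply Filter.Tendsto.congr' _ (tendsto_const_nhds (x := (1:ℝ)))
    filter_upwards [hev] with a ha
    obtain ⟨hk2, ha0, hLpos⟩ := key a ha
    subst hk
    have h1 : Real.sqrt (a ^ 2 - 0 ^ 2) = -a := by
      rw [show a ^ 2 - 0 ^ 2 = a ^ 2 by ring, Real.sqrt_sq_eq_abs, abs_of_neg ha0]
    rw [h1]
    rw [abs_of_neg ha0]
    have ha' : a ≠ 0 := ha0.ne
    field_simp
    simp [ha']
  · -- k ≠ 0 case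
    have hC : Tendsto (fun a : ℝ => Real.cosh (L a * T)) atBot atTop :=
      cosh_tendsto.comp hellT
    -- L a / cosh (L a * T) → 0
    have hLC : Tendsto (fun a : ℝ => L a / Real.cosh (L a * T)) atBot (nhds 0) := by
      have h1 : Tendsto (fun x : ℝ => (1 / T) * (x / Real.cosh x)) atTop (nhds 0) := by
        simpa using id_div_cosh.const_mul (1 / T)
      have h2 := h1.comp hellT
      apply h2.congr
      intro a
      have hc : Real.cosh (L a * T) ≠ 0 := (Real.cosh_pos _).ne'
      simp only [Function.comp]
      field_simp
      simp only [hL]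
      ring
    -- a / cosh (L a * T) → 0
    have haC : Tendsto (fun a : ℝ => a / Real.cosh (L a * T)) atBot (nhds 0) := by
      have hg : Tendsto (fun a : ℝ => L a / Real.cosh (L a * T) +
          |k| * (Real.cosh (L a * T))⁻¹) atBot (nhds 0) := by
        have h2 := (hC.inv_tendsto_atTop).const_mul |k|
        simpa using hLC.add h2
      apply squeeze_zero_norm' _ hg
      filter_upwards [hev] with a ha
      obtain ⟨hk2, ha0, hLpos⟩ := key a ha
      have hc : (0:ℝ) < Real.cosh (L a * T) := Real.cosh_pos _
      have habs : |a| ≤ L a + |k| := by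
        have hL2 : L a ^ 2 = a ^ 2 - k ^ 2 := Real.sq_sqrt (by linarith)
        have hk2' : |k| ^ 2 = k ^ 2 := sq_abs k
        rw [abs_of_neg ha0]
        nlinarith [hLpos.le, abs_nonneg k]
      rw [Real.norm_eq_abs, abs_div, abs_of_pos hc]
      calc |a| / Real.cosh (L a * T) ≤ (L a + |k|) / Real.cosh (L a * T) := by gcongr
        _ = L a / Real.cosh (L a * T) + |k| * (Real.cosh (L a * T))⁻¹ := by
            rw [add_div]; ring
    -- inner fraction → 1
    have hB : Tendsto (fun a : ℝ =>
        (-k * (Real.sinh (L a * T) / Real.cosh (L a * T)) - L a / Real.cosh (L a * T)) /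
          (a / Real.cosh (L a * T) - k)) atBot (nhds 1) := by
      have hnum : Tendsto (fun a : ℝ => -k * (Real.sinh (L a * T) / Real.cosh (L a * T)) -
          L a / Real.cosh (L a * T)) atBot (nhds (-k)) := by
        have h1 := (tanh_tendsto.comp hellT).const_mul (-k)
        have h2 : Tendsto (fun a : ℝ => -k * (Real.sinh (L a * T) / Real.cosh (L a * T)))
            atBot (nhds (-k)) := by simpa using h1
        simpa using h2.sub hLC
      have hden : Tendsto (fun a : ℝ => a / Real.cosh (L a * T) - k) atBot (nhds (-k)) := by
        have := haC.sub (tendsto_const_nhds (x := k))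
        simpa using this
      have hne : (-k : ℝ) ≠ 0 := neg_ne_zero.mpr hk
      have := hnum.div hden hne
      simpa [div_self hne, Pi.div_def] using this
    have hprod : Tendsto (fun a : ℝ => (|a| / L a) *
        ((-k * (Real.sinh (L a * T) / Real.cosh (L a * T)) - L a / Real.cosh (L a * T)) /
          (a / Real.cosh (L a * T) - k))) atBot (nhds 1) := by
      simpa using hA.mul hB
    apply Filter.Tendsto.congr' _ hprod
    filter_upwards [hev] with a ha
    obtain ⟨hk2, ha0, hLpos⟩ := key a ha
    have hc : Real.cosh (L a * T) ≠ 0 := (Real.cosh_pos _).ne'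
    have hl : L a ≠ 0 := hLpos.ne'
    rcases eq_or_ne (a - k * Real.cosh (L a * T)) 0 with hd | hd
    · have h1 : a / Real.cosh (L a * T) - k = 0 := by
        rw [sub_eq_zero, div_eq_iff hc]; linarith
      simp [hd, h1]
      exact Or.inr (Or.inr (Or.inr hd))
    · have hD2 : a / Real.cosh (L a * T) - k ≠ 0 := by
        rw [div_sub' hc]
        exact div_ne_zero (by rwa [mul_comm] at hd) hc
      simp only [hL] at hc hl hd hD2 ⊢
      set l := Real.sqrt (a ^ 2 - k ^ 2) with hldef
      set C := Real.cosh (l * T) with hCdef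
      set s := Real.sinh (l * T) with hsdef
      have e1 : -k * (s / C) - l / C = (-k * s - l) / C := by
        rw [← mul_div_assoc, div_sub_div_same]
      have e2 : a / C - k = (a - k * C) / C := by
        rw [div_sub' hc, mul_comm C k]
      rw [e1, e2, div_div_div_cancel_right₀ hc]
      rw [div_mul_div_comm,
        show (2:ℝ) * |a| * ((-k * s - l) / (2 * l * (a - k * C))) =
          (2 * |a| * (-k * s - l)) / (2 * l * (a - k * C)) from (mul_div_assoc _ _ _).symm,
        div_eq_div_iff (mul_ne_zero hl hd) (mul_ne_zero (mul_ne_zero two_ne_zero hl) hd)]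
      ring
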